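/- arXiv:1910.03978 — 3 statements merged into one kernel-verified Lean document; each statement's English description precedes it below -/
import Mathlib

section
/- Let G = diag(λ_1, λ_2, λ_3) with distinct positive entries λ_1, λ_2, λ_3, and let Φ(Q) = tr(G(I − Q)) for Q ∈ SO(3). Then Q ∈ SO(3) is a critical point of Φ (i.e., tr(G Q η^∧) = 0 for all η ∈ R^3) if and only if Q ∈ {I, D_1, D_2, D_3}, where D_i = 2 e_i e_i^T − I and e_i is the i-th standard basis vector. -/
open Matrix

def hat (x : Fin 3 → ℝ) : Matrix (Fin 3) (Fin 3) ℝ :=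
  !![0, -x 2, x 1; x 2, 0, -x 0; -x 1, x 0, 0]

/-- `D_i = 2 e_i e_iᵀ − I`. -/
def Dmat (i : Fin 3) : Matrix (Fin 3) (Fin 3) ℝ :=
  (2 : ℝ) • vecMulVec (Pi.single i 1) (Pi.single i 1) - 1

lemma Dmat0 : Dmat 0 = !![1,0,0;0,-1,0;0,0,-1] := by
  ext a b; fin_cases a <;> fin_cases b <;>
    simp [Dmat, vecMulVec, Pi.single_apply, Matrix.one_apply, Matrix.vecHead, Matrix.vecTail] <;> norm_num

lemma Dmat1 : Dmat 1 = !![-1,0,0;0,1,0;0,0,-1] := by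
  ext a b; fin_cases a <;> fin_cases b <;>
    simp [Dmat, vecMulVec, Pi.single_apply, Matrix.one_apply, Matrix.vecHead, Matrix.vecTail] <;> norm_num

lemma Dmat2 : Dmat 2 = !![-1,0,0;0,-1,0;0,0,1] := by
  ext a b; fin_cases a <;> fin_cases b <;>
    simp [Dmat, vecMulVec, Pi.single_apply, Matrix.one_apply, Matrix.vecHead, Matrix.vecTail] <;> norm_num

theorem critical_points_trace_form (l : Fin 3 → ℝ) (hpos : ∀ i, 0 < l i)
    (hdist : Function.Injective l)
    (Q : Matrix (Fin 3) (Fin 3) ℝ) (hQ : Qᵀ * Q = 1) (hdet : Q.det = 1) :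
    (∀ η : Fin 3 → ℝ, (Matrix.diagonal l * Q * hat η).trace = 0) ↔
      Q = 1 ∨ Q = Dmat 0 ∨ Q = Dmat 1 ∨ Q = Dmat 2 := by
  constructor
  · intro h
    -- scalar symmetry relations
    have e0 := h ![1,0,0]
    have e1 := h ![0,1,0]
    have e2 := h ![0,0,1]
    simp [Matrix.trace, Matrix.mul_apply, Fin.sum_univ_three, hat, Matrix.diagonal,
      Matrix.diag] at e0 e1 e2
    -- GQ = QᵀG
    have hsym : Matrix.diagonal l * Q = Qᵀ * Matrix.diagonal l := by
      ext i j
      fin_cases i <;> fin_cases j <;>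
        simp [Matrix.mul_apply, Fin.sum_univ_three, Matrix.diagonal, Matrix.transpose_apply] <;>
        linarith
    have hQQt : Q * Qᵀ = 1 := mul_eq_one_comm.mp hQ
    have h2 : Q * Matrix.diagonal l = Matrix.diagonal l * Qᵀ := by
      calc Q * Matrix.diagonal l = Q * Matrix.diagonal l * (Q * Qᵀ) := by rw [hQQt, mul_one]
        _ = Q * (Matrix.diagonal l * Q) * Qᵀ := by noncomm_ring
        _ = Q * (Qᵀ * Matrix.diagonal l) * Qᵀ := by rw [hsym]
        _ = (Q * Qᵀ) * (Matrix.diagonal l * Qᵀ) := by noncomm_ring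
        _ = Matrix.diagonal l * Qᵀ := by rw [hQQt, one_mul]
    -- off-diagonal entries vanish
    have hoff : ∀ i j, i ≠ j → Q i j = 0 := by
      intro i j hij
      have a1 : l i * Q i j = Qᵀ i j * l j := by
        have := congrFun (congrFun hsym i) j
        rwa [Matrix.diagonal_mul, Matrix.mul_diagonal] at this
      have a2 : Q i j * l j = l i * Qᵀ i j := by
        have := congrFun (congrFun h2 i) j
        rwa [Matrix.diagonal_mul, Matrix.mul_diagonal] at this
      rw [Matrix.transpose_apply] at a1 a2
      have hne : l i ≠ l j := fun hl => hij (hdist hl)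
      have key : (l i - l j) * (l i + l j) * Q i j = 0 := by
        linear_combination l i * a1 - l j * a2
      have h1 : l i - l j ≠ 0 := sub_ne_zero.mpr hne
      have h2' : l i + l j ≠ 0 := by have := hpos i; have := hpos j; positivity
      rcases mul_eq_zero.mp key with h' | h'
      · exact absurd h' (mul_ne_zero h1 h2')
      · exact h'
    have z01 := hoff 0 1 (by decide)
    have z02 := hoff 0 2 (by decide)
    have z10 := hoff 1 0 (by decide)
    have z12 := hoff 1 2 (by decide)
    have z20 := hoff 2 0 (by decide)
    have z21 := hoff 2 1 (by decide)
    -- diagonal entries are ±1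
    have hsq : ∀ i, Q i i * Q i i = 1 := by
      intro i
      have := congrFun (congrFun hQ i) i
      fin_cases i <;>
        simp_all [Matrix.mul_apply, Fin.sum_univ_three, Matrix.transpose_apply, Matrix.one_apply]
    have hdet' : Q 0 0 * Q 1 1 * Q 2 2 = 1 := by
      rw [Matrix.det_fin_three] at hdet
      rw [z01, z02, z10, z12, z20, z21] at hdet
      linarith
    have c0 := mul_self_eq_one_iff.mp (hsq 0)
    have c1 := mul_self_eq_one_iff.mp (hsq 1)
    have c2 := mul_self_eq_one_iff.mp (hsq 2)
    clear h e0 e1 e2 hsym hQQt h2 hoff hsq hQ hdet hdist hpos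
    rw [Dmat0, Dmat1, Dmat2]
    rcases c0 with c0 | c0 <;> rcases c1 with c1 | c1 <;> rcases c2 with c2 | c2
    · left; ext a b; fin_cases a <;> fin_cases b <;> simp_all [Matrix.one_apply]
    · exfalso; rw [c0, c1, c2] at hdet'; norm_num at hdet'
    · exfalso; rw [c0, c1, c2] at hdet'; norm_num at hdet'
    · right; left; ext a b; fin_cases a <;> fin_cases b <;> simp_all [Matrix.vecHead, Matrix.vecTail]
    · exfalso; rw [c0, c1, c2] at hdet'; norm_num at hdet'
    · right; right; left; ext a b; fin_cases a <;> fin_cases b <;> simp_all [Matrix.vecHead, Matrix.vecTail]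
    · right; right; right; ext a b; fin_cases a <;> fin_cases b <;> simp_all [Matrix.vecHead, Matrix.vecTail]
    · exfalso; rw [c0, c1, c2] at hdet'; norm_num at hdet'
  · rintro (rfl | rfl | rfl | rfl) <;> intro η
    · simp [Matrix.trace, Matrix.mul_apply, Fin.sum_univ_three, hat, Matrix.diagonal,
        Matrix.diag, Matrix.one_apply]
    · rw [Dmat0]; simp [Matrix.trace, Matrix.mul_apply, Fin.sum_univ_three, hat,
        Matrix.diagonal, Matrix.diag, Matrix.vecHead, Matrix.vecTail]
    · rw [Dmat1]; simp [Matrix.trace, Matrix.mul_apply, Fin.sum_univ_three, hat,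
        Matrix.diagonal, Matrix.diag, Matrix.vecHead, Matrix.vecTail]
    · rw [Dmat2]; simp [Matrix.trace, Matrix.mul_apply, Fin.sum_univ_three, hat,
        Matrix.diagonal, Matrix.diag, Matrix.vecHead, Matrix.vecTail]
end

section
/- Let R, R̂ ∈ SO(3), let b_1, ..., b_m be unit vectors in R^3 with positive weights k_1, ..., k_m, and define K = Σ_j k_j b_j b_j^T, Q̃ = R̂ R^T, and e = Σ_j k_j (R̂^T b_j) × (R^T b_j). Then e^∧ = R^T (K Q̃ − Q̃^T K) R. -/
open Matrix

lemma hat_add (x y : Fin 3 → ℝ) : hat (x + y) = hat x + hat y := by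
  ext i j; fin_cases i <;> fin_cases j <;> simp [hat] <;> ring

lemma hat_smul (c : ℝ) (x : Fin 3 → ℝ) : hat (c • x) = c • hat x := by
  ext i j; fin_cases i <;> fin_cases j <;> simp [hat] <;> ring

lemma hat_zero : hat 0 = 0 := by
  ext i j; fin_cases i <;> fin_cases j <;> simp [hat, vecHead, vecTail]

lemma hat_sum {m : ℕ} (f : Fin m → (Fin 3 → ℝ)) :
    hat (∑ j, f j) = ∑ j, hat (f j) := by
  classical
  induction (Finset.univ : Finset (Fin m)) using Finset.induction with
  | empty => simpa using hat_zero
  | insert _ _ h ih => rw [Finset.sum_insert h, Finset.sum_insert h, hat_add, ih]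

lemma hat_cross (u v : Fin 3 → ℝ) :
    hat (crossProduct u v) = vecMulVec v u - vecMulVec u v := by
  ext i j
  fin_cases i <;> fin_cases j <;>
    simp [hat, crossProduct, vecMulVec] <;> ring

lemma vecMulVec_mulVec (M N : Matrix (Fin 3) (Fin 3) ℝ) (x y : Fin 3 → ℝ) :
    vecMulVec (M *ᵥ x) (N *ᵥ y) = M * vecMulVec x y * Nᵀ := by
  ext i j
  simp [vecMulVec, mulVec, Matrix.mul_apply, dotProduct, Finset.sum_mul,
    Finset.mul_sum]
  apply Finset.sum_congr rfl; intro a _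
  apply Finset.sum_congr rfl; intro c _
  ring

lemma aux1 (R Rh : Matrix (Fin 3) (Fin 3) ℝ) (hR : Rᵀ * R = 1)
    (A : Matrix (Fin 3) (Fin 3) ℝ) : Rᵀ * (A * (Rh * Rᵀ)) * R = Rᵀ * A * Rh := by
  rw [show Rᵀ * (A * (Rh * Rᵀ)) * R = Rᵀ * A * Rh * (Rᵀ * R) by
    simp [Matrix.mul_assoc], hR, mul_one]

lemma aux2 (R Rh : Matrix (Fin 3) (Fin 3) ℝ) (hR : Rᵀ * R = 1)
    (A : Matrix (Fin 3) (Fin 3) ℝ) : Rᵀ * (R * Rhᵀ * A) * R = Rhᵀ * A * R := by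
  rw [show Rᵀ * (R * Rhᵀ * A) * R = Rᵀ * R * (Rhᵀ * (A * R)) by simp [Matrix.mul_assoc],
    hR, one_mul, Matrix.mul_assoc]

theorem hat_error_vector (m : ℕ) (R Rh : Matrix (Fin 3) (Fin 3) ℝ)
    (hR : Rᵀ * R = 1) (hRdet : R.det = 1) (hRh : Rhᵀ * Rh = 1) (hRhdet : Rh.det = 1)
    (b : Fin m → (Fin 3 → ℝ)) (hb : ∀ j, b j ⬝ᵥ b j = 1)
    (k : Fin m → ℝ) (hk : ∀ j, 0 < k j) :
    hat (∑ j, k j • crossProduct (Rhᵀ *ᵥ b j) (Rᵀ *ᵥ b j)) =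
      Rᵀ * ((∑ j, k j • vecMulVec (b j) (b j)) * (Rh * Rᵀ)
        - (Rh * Rᵀ)ᵀ * (∑ j, k j • vecMulVec (b j) (b j))) * R := by
  rw [hat_sum]
  rw [Matrix.mul_sub, Matrix.sub_mul, Finset.sum_mul, Finset.mul_sum,
    Finset.mul_sum, Finset.mul_sum, Finset.sum_mul, Finset.sum_mul,
    ← Finset.sum_sub_distrib]
  apply Finset.sum_congr rfl; intro j _
  rw [hat_smul, hat_cross, vecMulVec_mulVec, vecMulVec_mulVec]
  simp only [Matrix.smul_mul, Matrix.mul_smul, transpose_transpose, transpose_mul]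
  rw [smul_sub, aux1 R Rh hR, aux2 R Rh hR]
end

section
/- Let p, p_1, ..., p_m ∈ R^3 with m ≥ 2, p ≠ p_j for all j, and suppose p is not collinear with at least one pair p_j, p_k (j ≠ k). Define b_j = (p_j − p)/||p_j − p|| and P_{b_j} = I − b_j b_j^T. Then p is the unique solution x of the linear system (Σ_j P_{b_j}) x = Σ_j P_{b_j} p_j, i.e., p = (Σ_j P_{b_j})^{-1} Σ_j P_{b_j} p_j. -/
open Matrix

noncomputable def bearing (p q : Fin 3 → ℝ) : Fin 3 → ℝ :=
  (Real.sqrt ((q - p) ⬝ᵥ (q - p)))⁻¹ • (q - p)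

lemma proj_mulVec (b v : Fin 3 → ℝ) :
    (1 - vecMulVec b b) *ᵥ v = v - (b ⬝ᵥ v) • b := by
  ext i
  simp only [Matrix.sub_mulVec, Matrix.one_mulVec, Pi.sub_apply, Pi.smul_apply, smul_eq_mul]
  congr 1
  simp [Matrix.mulVec, vecMulVec, dotProduct, Finset.mul_sum, Finset.sum_mul,
    mul_comm, mul_left_comm]

lemma dotProduct_self_nonneg' (v : Fin 3 → ℝ) : 0 ≤ v ⬝ᵥ v :=
  Finset.sum_nonneg fun i _ => mul_self_nonneg _

lemma sum_mulVec' {m : ℕ} (M : Fin m → Matrix (Fin 3) (Fin 3) ℝ) (v : Fin 3 → ℝ) :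
    (∑ j, M j) *ᵥ v = ∑ j, M j *ᵥ v := by
  ext i
  simp only [Matrix.mulVec, dotProduct, Finset.sum_apply, Matrix.sum_apply, Finset.sum_mul]
  rw [Finset.sum_comm]

lemma dotProduct_sum' {m : ℕ} (v : Fin 3 → ℝ) (w : Fin m → Fin 3 → ℝ) :
    v ⬝ᵥ (∑ j, w j) = ∑ j, v ⬝ᵥ w j := by
  simp only [dotProduct, Finset.sum_apply, Finset.mul_sum]
  rw [Finset.sum_comm]

theorem unique_position (m : ℕ) (hm : 2 ≤ m) (p : Fin 3 → ℝ) (q : Fin m → (Fin 3 → ℝ))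
    (hne : ∀ j, p ≠ q j)
    (hind : ∃ j k : Fin m, LinearIndependent ℝ ![q j - p, q k - p]) :
    (∑ j, (1 - vecMulVec (bearing p (q j)) (bearing p (q j)))) *ᵥ p =
        ∑ j, (1 - vecMulVec (bearing p (q j)) (bearing p (q j))) *ᵥ (q j) ∧
    ∀ x : Fin 3 → ℝ,
      (∑ j, (1 - vecMulVec (bearing p (q j)) (bearing p (q j)))) *ᵥ x =
          ∑ j, (1 - vecMulVec (bearing p (q j)) (bearing p (q j))) *ᵥ (q j) → x = p := by
  have hd : ∀ j, 0 < (q j - p) ⬝ᵥ (q j - p) := by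
    intro j
    rcases (dotProduct_self_nonneg' (q j - p)).lt_or_eq with h | h
    · exact h
    · exact absurd (sub_eq_zero.mp ((dotProduct_self_eq_zero).mp h.symm)) (fun hh => hne j hh.symm)
  have hn : ∀ j, Real.sqrt ((q j - p) ⬝ᵥ (q j - p)) > 0 := fun j => Real.sqrt_pos.mpr (hd j)
  have hsq : ∀ j, Real.sqrt ((q j - p) ⬝ᵥ (q j - p)) * Real.sqrt ((q j - p) ⬝ᵥ (q j - p))
      = (q j - p) ⬝ᵥ (q j - p) := fun j => Real.mul_self_sqrt (hd j).le
  set b : Fin m → Fin 3 → ℝ := fun j => bearing p (q j) with hbdef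
  have hbunit : ∀ j, b j ⬝ᵥ b j = 1 := by
    intro j
    show ((Real.sqrt ((q j - p) ⬝ᵥ (q j - p)))⁻¹ • (q j - p)) ⬝ᵥ
      ((Real.sqrt ((q j - p) ⬝ᵥ (q j - p)))⁻¹ • (q j - p)) = 1
    rw [smul_dotProduct, dotProduct_smul, smul_eq_mul, smul_eq_mul]
    have h2 : (Real.sqrt ((q j - p) ⬝ᵥ (q j - p)))⁻¹ *
        ((Real.sqrt ((q j - p) ⬝ᵥ (q j - p)))⁻¹ * ((q j - p) ⬝ᵥ (q j - p)))
        = ((q j - p) ⬝ᵥ (q j - p)) /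
          (Real.sqrt ((q j - p) ⬝ᵥ (q j - p)) * Real.sqrt ((q j - p) ⬝ᵥ (q j - p))) := by
      ring
    rw [h2, hsq j, div_self (hd j).ne']
  have hbdot : ∀ j, b j ⬝ᵥ (q j - p) = Real.sqrt ((q j - p) ⬝ᵥ (q j - p)) := by
    intro j
    show ((Real.sqrt ((q j - p) ⬝ᵥ (q j - p)))⁻¹ • (q j - p)) ⬝ᵥ (q j - p) = _
    rw [smul_dotProduct, smul_eq_mul, inv_mul_eq_div, div_eq_iff (hn j).ne']
    exact (hsq j).symm
  have hker : ∀ j, (1 - vecMulVec (b j) (b j)) *ᵥ (q j - p) = 0 := by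
    intro j
    rw [proj_mulVec, hbdot j]
    show q j - p - Real.sqrt ((q j - p) ⬝ᵥ (q j - p)) •
      ((Real.sqrt ((q j - p) ⬝ᵥ (q j - p)))⁻¹ • (q j - p)) = 0
    rw [smul_smul, mul_inv_cancel₀ (hn j).ne', one_smul, sub_self]
  have hPeq : ∀ j, (1 - vecMulVec (b j) (b j)) *ᵥ p = (1 - vecMulVec (b j) (b j)) *ᵥ (q j) := by
    intro j
    have h := hker j
    rw [Matrix.mulVec_sub] at h
    exact (sub_eq_zero.mp h).symm
  have hfirst : (∑ j, (1 - vecMulVec (b j) (b j))) *ᵥ p =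
      ∑ j, (1 - vecMulVec (b j) (b j)) *ᵥ (q j) := by
    rw [sum_mulVec']
    exact Finset.sum_congr rfl fun j _ => hPeq j
  refine ⟨hfirst, ?_⟩
  intro x hx
  have hsum0 : ∑ j, (1 - vecMulVec (b j) (b j)) *ᵥ (x - p) = 0 := by
    have h : (∑ j, (1 - vecMulVec (b j) (b j))) *ᵥ (x - p) = 0 := by
      rw [Matrix.mulVec_sub, hx, hfirst, sub_self]
    rw [sum_mulVec'] at h
    exact h
  set v : Fin 3 → ℝ := x - p with hv
  have hdot0 : ∑ j, v ⬝ᵥ ((1 - vecMulVec (b j) (b j)) *ᵥ v) = 0 := by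
    rw [← dotProduct_sum', hsum0, dotProduct_zero]
  have hterm : ∀ j, v ⬝ᵥ ((1 - vecMulVec (b j) (b j)) *ᵥ v) =
      ((1 - vecMulVec (b j) (b j)) *ᵥ v) ⬝ᵥ ((1 - vecMulVec (b j) (b j)) *ᵥ v) := by
    intro j
    rw [proj_mulVec]
    have h1 := hbunit j
    simp only [dotProduct_sub, sub_dotProduct, dotProduct_smul, smul_dotProduct, smul_eq_mul, h1,
      dotProduct_comm v (b j)]
    ring
  have hnonneg : ∀ j ∈ Finset.univ, (0:ℝ) ≤ v ⬝ᵥ ((1 - vecMulVec (b j) (b j)) *ᵥ v) := by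
    intro j _
    rw [hterm j]
    exact dotProduct_self_nonneg' _
  have hzero : ∀ j, (1 - vecMulVec (b j) (b j)) *ᵥ v = 0 := by
    intro j
    have h := (Finset.sum_eq_zero_iff_of_nonneg hnonneg).mp hdot0 j (Finset.mem_univ j)
    rw [hterm j] at h
    exact dotProduct_self_eq_zero.mp h
  have hmul : ∀ j, v = ((b j ⬝ᵥ v) * (Real.sqrt ((q j - p) ⬝ᵥ (q j - p)))⁻¹) • (q j - p) := by
    intro j
    have h := hzero j
    rw [proj_mulVec, sub_eq_zero] at h
    calc v = (b j ⬝ᵥ v) • b j := h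
      _ = (b j ⬝ᵥ v) • ((Real.sqrt ((q j - p) ⬝ᵥ (q j - p)))⁻¹ • (q j - p)) := rfl
      _ = ((b j ⬝ᵥ v) * (Real.sqrt ((q j - p) ⬝ᵥ (q j - p)))⁻¹) • (q j - p) := smul_smul _ _ _
  obtain ⟨j, k, hjk⟩ := hind
  rw [LinearIndependent.pair_iff] at hjk
  have heq : ((b j ⬝ᵥ v) * (Real.sqrt ((q j - p) ⬝ᵥ (q j - p)))⁻¹) • (q j - p)
      + (-((b k ⬝ᵥ v) * (Real.sqrt ((q k - p) ⬝ᵥ (q k - p)))⁻¹)) • (q k - p) = 0 := by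
    rw [neg_smul, ← hmul j, ← hmul k, add_neg_cancel]
  have h0 := (hjk _ _ heq).1
  have hv0 : v = 0 := by rw [hmul j, h0, zero_smul]
  exact sub_eq_zero.mp hv0
end
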